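/- The map Y_{a,b}(x1,x2,y1,y2) = (y1 + (a-b)/(x1-y2), y2, x1, x2 + (a-b)/(x1-y2)), defined for x1 ≠ y2, satisfies the parametric Yang-Baxter equation Y^{12}_{a,b} ∘ Y^{13}_{a,c} ∘ Y^{23}_{b,c} = Y^{23}_{b,c} ∘ Y^{13}_{a,c} ∘ Y^{12}_{a,b} (as partial maps, on points where all denominators involved are nonzero). -/

import Mathlib

/-- The dpKdV-lift Yang-Baxter map on pairs of points of `K × K`. -/
noncomputable def YBlift {K : Type*} [Field K] (a b : K)
    (p : (K × K) × (K × K)) : (K × K) × (K × K) :=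
  ((p.2.1 + (a - b) / (p.1.1 - p.2.2), p.2.2),
   (p.1.1, p.1.2 + (a - b) / (p.1.1 - p.2.2)))

/-- The denominator appearing in `YBlift`. -/
def YBden {K : Type*} [Field K] (p : (K × K) × (K × K)) : K := p.1.1 - p.2.2

noncomputable def Y12 {K : Type*} [Field K] (a b : K)
    (t : (K × K) × (K × K) × (K × K)) : (K × K) × (K × K) × (K × K) :=
  ((YBlift a b (t.1, t.2.1)).1, (YBlift a b (t.1, t.2.1)).2, t.2.2)

noncomputable def Y23 {K : Type*} [Field K] (b c : K)
    (t : (K × K) × (K × K) × (K × K)) : (K × K) × (K × K) × (K × K) :=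
  (t.1, (YBlift b c (t.2.1, t.2.2)).1, (YBlift b c (t.2.1, t.2.2)).2)

noncomputable def Y13 {K : Type*} [Field K] (a c : K)
    (t : (K × K) × (K × K) × (K × K)) : (K × K) × (K × K) × (K × K) :=
  ((YBlift a c (t.1, t.2.2)).1, t.2.1, (YBlift a c (t.1, t.2.2)).2)

/-- The map `Y_{a,b}` satisfies the parametric Yang-Baxter equation, on points
where all denominators involved in both compositions are nonzero. -/
theorem yblift_parametric_yang_baxter {K : Type*} [Field K] (a b c : K)
    (t : (K × K) × (K × K) × (K × K))
    (h1 : YBden (t.2.1, t.2.2) ≠ 0)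
    (h2 : YBden ((Y23 b c t).1, (Y23 b c t).2.2) ≠ 0)
    (h3 : YBden ((Y13 a c (Y23 b c t)).1, (Y13 a c (Y23 b c t)).2.1) ≠ 0)
    (h4 : YBden (t.1, t.2.1) ≠ 0)
    (h5 : YBden ((Y12 a b t).1, (Y12 a b t).2.2) ≠ 0)
    (h6 : YBden ((Y13 a c (Y12 a b t)).2.1, (Y13 a c (Y12 a b t)).2.2) ≠ 0) :
    Y12 a b (Y13 a c (Y23 b c t)) = Y23 b c (Y13 a c (Y12 a b t)) := by
  obtain ⟨⟨x1,x2⟩,⟨y1,y2⟩,⟨z1,z2⟩⟩ := t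
  simp only [Y12, Y23, Y13, YBlift, YBden] at *
  have e2 : x1 - (y2 + (b-c)/(y1-z2)) = ((x1-y2)*(y1-z2)-(b-c))/(y1-z2) := by
    field_simp; ring
  have e5 : y1 + (a-b)/(x1-y2) - z2 = ((x1-y2)*(y1-z2)+(a-b))/(x1-y2) := by
    field_simp; ring
  rw [e2, div_ne_zero_iff] at h2
  rw [e5, div_ne_zero_iff] at h5
  have hA : (x1-y2)*(y1-z2)-(b-c) ≠ 0 := h2.1
  have hE : (x1-y2)*(y1-z2)+(a-b) ≠ 0 := h5.1
  rw [e2] at h3 ⊢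
  rw [e5] at h6 ⊢
  simp only [div_div_eq_mul_div] at h3 h6 ⊢
  have e3 : y1 + (a-c)*(y1-z2)/((x1-y2)*(y1-z2)-(b-c)) - z2
      = (y1-z2)*((x1-y2)*(y1-z2)+(a-b))/((x1-y2)*(y1-z2)-(b-c)) := by
    rw [eq_div_iff hA, sub_mul, add_mul, div_mul_cancel₀ _ hA]; ring
  have e6 : x1 - (y2 + (a-c)*(x1-y2)/((x1-y2)*(y1-z2)+(a-b)))
      = (x1-y2)*((x1-y2)*(y1-z2)-(b-c))/((x1-y2)*(y1-z2)+(a-b)) := by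
    rw [eq_div_iff hE, sub_mul, add_mul, div_mul_cancel₀ _ hE]; ring
  rw [e3] at h3 ⊢
  rw [e6] at h6 ⊢
  simp only [Prod.mk.injEq]
  have hA' : (y1-z2)*(x1-y2)-(b-c) ≠ 0 := by rwa [mul_comm]
  have hE' : (y1-z2)*(x1-y2)+(a-b) ≠ 0 := by rwa [mul_comm]
  refine ⟨⟨?_, by trivial⟩, ⟨?_, ?_⟩, by trivial, ?_⟩ <;> field_simp <;> ring
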